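/- The pointwise Ebin distance is invariant under simultaneous congruence up to the volume factor: for symmetric positive-definite g₀, g₁ and invertible B, d(Bᵀg₀B, Bᵀg₁B)² = |det B| · d(g₀, g₁)². -/

import Mathlib

open Matrix

/-- `k` is a real logarithm of `m` that is similar to a real symmetric matrix. -/
def IsRealLog {n : ℕ} (k m : Matrix (Fin n) (Fin n) ℝ) : Prop :=
  NormedSpace.exp k = m ∧
    ∃ P S : Matrix (Fin n) (Fin n) ℝ, IsUnit P.det ∧ S.IsSymm ∧ k = P⁻¹ * S * P

/-- The traceless part of `k`. -/
noncomputable def tracelessPart {n : ℕ} (k : Matrix (Fin n) (Fin n) ℝ) :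
    Matrix (Fin n) (Fin n) ℝ :=
  k - (k.trace / n) • 1

/-- `κ = √(n Tr(k₀²))/4`. -/
noncomputable def kappa {n : ℕ} (k : Matrix (Fin n) (Fin n) ℝ) : ℝ :=
  Real.sqrt (n * (tracelessPart k * tracelessPart k).trace) / 4

/-- Pointwise squared Ebin distance, where `k` is the real logarithm of `g₀⁻¹g₁`. -/
noncomputable def ebinD2 {n : ℕ} (g₀ g₁ k : Matrix (Fin n) (Fin n) ℝ) : ℝ :=
  (16 / n) * ((g₀.det ^ ((1 : ℝ) / 4)) ^ 2 -
    2 * (g₀.det ^ ((1 : ℝ) / 4)) * (g₁.det ^ ((1 : ℝ) / 4)) *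
      Real.cos (min Real.pi (kappa k)) + (g₁.det ^ ((1 : ℝ) / 4)) ^ 2)

section Aux

variable {n : ℕ}

/-- A real log in the sense of `IsRealLog` is conjugate to a real diagonal matrix. -/
lemma IsRealLog.diag {k m : Matrix (Fin n) (Fin n) ℝ} (h : IsRealLog k m) :
    ∃ (R : Matrix (Fin n) (Fin n) ℝ) (d : Fin n → ℝ),
      IsUnit R.det ∧ k = R⁻¹ * diagonal d * R := by
  obtain ⟨-, P, S, hP, hS, hk⟩ := h
  have hH : S.IsHermitian := by
    rwa [Matrix.IsHermitian, Matrix.conjTranspose_eq_transpose_of_trivial]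
  set U : Matrix (Fin n) (Fin n) ℝ := (hH.eigenvectorUnitary : Matrix (Fin n) (Fin n) ℝ) with hU
  have hU1 : U * star U = 1 := (Matrix.mem_unitaryGroup_iff).mp hH.eigenvectorUnitary.2
  have hU1' : star U * U = 1 := (Matrix.mem_unitaryGroup_iff').mp hH.eigenvectorUnitary.2
  have hUdet : IsUnit U.det := by
    apply IsUnit.of_mul_eq_one (star U).det
    rw [← Matrix.det_mul, hU1, Matrix.det_one]
  have hsUdet : IsUnit (star U).det := by
    apply IsUnit.of_mul_eq_one U.det
    rw [← Matrix.det_mul, hU1', Matrix.det_one]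
  have hUinv : U⁻¹ = star U := Matrix.inv_eq_left_inv hU1'
  have hsUinv : (star U)⁻¹ = U := Matrix.inv_eq_left_inv hU1
  refine ⟨star U * P, RCLike.ofReal ∘ hH.eigenvalues,
    by rw [Matrix.det_mul]; exact hsUdet.mul hP, ?_⟩
  have hspec := hH.spectral_theorem
  rw [hk, Matrix.mul_inv_rev, hsUinv]
  conv_lhs => rw [hspec, Unitary.conjStarAlgAut_apply]
  simp only [Matrix.mul_assoc]
  rfl

/-- Uniqueness of the real logarithm. -/
lemma isRealLog_unique {k l m : Matrix (Fin n) (Fin n) ℝ}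
    (hk : IsRealLog k m) (hl : IsRealLog l m) : k = l := by
  obtain ⟨R, d, hR, hkR⟩ := hk.diag
  obtain ⟨V, e, hV, hlV⟩ := hl.diag
  have hRR : R * R⁻¹ = 1 := Matrix.mul_nonsing_inv R hR
  have hRR' : R⁻¹ * R = 1 := Matrix.nonsing_inv_mul R hR
  have hVV : V * V⁻¹ = 1 := Matrix.mul_nonsing_inv V hV
  have hVV' : V⁻¹ * V = 1 := Matrix.nonsing_inv_mul V hV
  have hexp : ∀ (W : Matrix (Fin n) (Fin n) ℝ) (f : Fin n → ℝ), IsUnit W.det →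
      NormedSpace.exp (W⁻¹ * diagonal f * W) =
        W⁻¹ * diagonal (fun i => Real.exp (f i)) * W := by
    intro W f hW
    rw [Matrix.exp_conj' W _ ((Matrix.isUnit_iff_isUnit_det W).mpr hW),
      Matrix.exp_diagonal, Pi.exp_def, ← Real.exp_eq_exp_ℝ]
  have h : R⁻¹ * diagonal (fun i => Real.exp (d i)) * R
      = V⁻¹ * diagonal (fun i => Real.exp (e i)) * V := by
    rw [← hexp R d hR, ← hexp V e hV, ← hkR, ← hlV, hk.1, hl.1]
  have h2 : (V * R⁻¹) * diagonal (fun i => Real.exp (d i))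
      = diagonal (fun i => Real.exp (e i)) * (V * R⁻¹) := by
    have h' := congrArg (fun X => V * X * R⁻¹) h
    simp only [Matrix.mul_assoc] at h' ⊢
    rwa [hRR, Matrix.mul_one, ← Matrix.mul_assoc V V⁻¹, hVV, Matrix.one_mul] at h'
  have h3 : (V * R⁻¹) * diagonal d = diagonal e * (V * R⁻¹) := by
    ext i j
    have hij := congrFun (congrFun h2 i) j
    simp only [Matrix.mul_diagonal, Matrix.diagonal_mul] at hij ⊢
    rcases eq_or_ne ((V * R⁻¹) i j) 0 with h0 | h0
    · simp [h0]
    · have hde : Real.exp (d j) = Real.exp (e i) := by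
        rw [mul_comm ((V * R⁻¹) i j)] at hij
        exact mul_right_cancel₀ h0 hij
      rw [Real.exp_eq_exp] at hde
      rw [hde, mul_comm]
  have h4 := congrArg (fun X => V⁻¹ * X * R) h3
  simp only [Matrix.mul_assoc] at h4
  rw [hRR', Matrix.mul_one, ← Matrix.mul_assoc V⁻¹ V, hVV', Matrix.one_mul] at h4
  rw [hkR, hlV]
  simp only [Matrix.mul_assoc]
  rw [h4]

/-- `kappa` is invariant under conjugation. -/
lemma kappa_conj (B k : Matrix (Fin n) (Fin n) ℝ) (hB : IsUnit B.det) :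
    kappa (B⁻¹ * k * B) = kappa k := by
  have hBB : B * B⁻¹ = 1 := Matrix.mul_nonsing_inv B hB
  have hBB' : B⁻¹ * B = 1 := Matrix.nonsing_inv_mul B hB
  have htrc : ∀ c : Matrix (Fin n) (Fin n) ℝ, (B⁻¹ * c * B).trace = c.trace := by
    intro c
    rw [Matrix.trace_mul_cycle, hBB, Matrix.one_mul]
  have hTP : tracelessPart (B⁻¹ * k * B) = B⁻¹ * tracelessPart k * B := by
    unfold tracelessPart
    rw [htrc]
    rw [Matrix.mul_sub, Matrix.sub_mul]
    congr 1
    rw [Matrix.mul_smul, Matrix.smul_mul, Matrix.mul_one, hBB']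
  have hsq : (B⁻¹ * tracelessPart k * B) * (B⁻¹ * tracelessPart k * B)
      = B⁻¹ * (tracelessPart k * tracelessPart k) * B := by
    simp only [Matrix.mul_assoc]
    rw [← Matrix.mul_assoc B B⁻¹, hBB, Matrix.one_mul]
  unfold kappa
  rw [hTP, hsq, htrc]

end Aux

/-- Pointwise diffeomorphism-invariance of the Ebin distance up to the Jacobian factor:
`d(Bᵀg₀B, Bᵀg₁B)² = |det B| · d(g₀,g₁)²`. -/
theorem ebinD2_congruence (n : ℕ) (hn : 0 < n)
    (g₀ g₁ B k k' : Matrix (Fin n) (Fin n) ℝ)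
    (hg₀ : g₀.PosDef) (hg₁ : g₁.PosDef) (hB : IsUnit B.det)
    (hlog : IsRealLog k (g₀⁻¹ * g₁))
    (hlog' : IsRealLog k' ((Bᵀ * g₀ * B)⁻¹ * (Bᵀ * g₁ * B))) :
    ebinD2 (Bᵀ * g₀ * B) (Bᵀ * g₁ * B) k' = |B.det| * ebinD2 g₀ g₁ k := by
  have hBt : IsUnit Bᵀ.det := by rwa [Matrix.det_transpose]
  have hBtB : (Bᵀ)⁻¹ * Bᵀ = 1 := Matrix.nonsing_inv_mul _ hBt
  -- rewrite the congruence of the quotient matrix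
  have hM : (Bᵀ * g₀ * B)⁻¹ * (Bᵀ * g₁ * B) = B⁻¹ * (g₀⁻¹ * g₁) * B := by
    rw [Matrix.mul_inv_rev, Matrix.mul_inv_rev]
    simp only [Matrix.mul_assoc]
    rw [← Matrix.mul_assoc (Bᵀ)⁻¹ Bᵀ, hBtB, Matrix.one_mul]
  -- `B⁻¹ k B` is also a real log of the conjugated quotient
  have hk'2 : IsRealLog (B⁻¹ * k * B) ((Bᵀ * g₀ * B)⁻¹ * (Bᵀ * g₁ * B)) := by
    rw [hM]
    constructor
    · rw [Matrix.exp_conj' B k ((Matrix.isUnit_iff_isUnit_det B).mpr hB), hlog.1]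
    · obtain ⟨P, S, hP, hS, hkP⟩ := hlog.2
      refine ⟨P * B, S, ?_, hS, ?_⟩
      · rw [Matrix.det_mul]; exact hP.mul hB
      · rw [hkP, Matrix.mul_inv_rev]
        simp only [Matrix.mul_assoc]
  have hkk : k' = B⁻¹ * k * B := isRealLog_unique hlog' hk'2
  have hkap : kappa k' = kappa k := by rw [hkk, kappa_conj B k hB]
  -- determinants
  have hdet₀ : (Bᵀ * g₀ * B).det = B.det ^ 2 * g₀.det := by
    rw [Matrix.det_mul, Matrix.det_mul, Matrix.det_transpose]; ring
  have hdet₁ : (Bᵀ * g₁ * B).det = B.det ^ 2 * g₁.det := by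
    rw [Matrix.det_mul, Matrix.det_mul, Matrix.det_transpose]; ring
  have key : ∀ x : ℝ, 0 < x →
      (B.det ^ 2 * x) ^ ((1 : ℝ) / 4) = (B.det ^ 2) ^ ((1 : ℝ) / 4) * x ^ ((1 : ℝ) / 4) :=
    fun x hx => Real.mul_rpow (sq_nonneg _) hx.le
  have hc2 : ((B.det ^ 2) ^ ((1 : ℝ) / 4)) ^ 2 = |B.det| := by
    rw [← Real.rpow_natCast ((B.det ^ 2) ^ ((1 : ℝ) / 4)) 2,
      ← Real.rpow_mul (sq_nonneg _)]
    norm_num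
    rw [← Real.sqrt_eq_rpow, Real.sqrt_sq_eq_abs]
  unfold ebinD2
  rw [hkap, hdet₀, hdet₁, key _ hg₀.det_pos, key _ hg₁.det_pos]
  set c := (B.det ^ 2) ^ ((1 : ℝ) / 4)
  set a := g₀.det ^ ((1 : ℝ) / 4)
  set b := g₁.det ^ ((1 : ℝ) / 4)
  set C := Real.cos (min Real.pi (kappa k))
  linear_combination ((16 / (n : ℝ)) * (a ^ 2 - 2 * a * b * C + b ^ 2)) * hc2
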